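/- arXiv:2005.05291 — 3 statements merged into one kernel-verified Lean document; each statement's English description precedes it below -/
import Mathlib

section
/- Let ℓ ≥ 1 and let C be a tightly connected ℓ-graph that contains a switcher. Then C is strongly connected: for any two directed edges of C there is a tight walk in C whose first ℓ vertices are the first directed edge in order and whose last ℓ vertices are the second directed edge in order. -/
open Finset

variable {A : Type*} [DecidableEq A]

/-- The set of vertices occupying positions `i, …, i+k-1` of the walk `w`. -/
def walkEdgeAt (k : ℕ) (w : List A) (i : ℕ) : Finset A :=
  ((w.drop i).take k).toFinset

/-- `w` is a tight walk in the `k`-graph with edge set `E`: it has at least `k`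
vertices and every `k` consecutive vertices form an edge of `E`. -/
def IsTightWalk (k : ℕ) (E : Finset (Finset A)) (w : List A) : Prop :=
  k ≤ w.length ∧ ∀ i, i + k ≤ w.length → walkEdgeAt k w i ∈ E

/-- The edge `e` appears on the walk `w` (as `k` consecutive vertices). -/
def EdgeOnWalk (k : ℕ) (w : List A) (e : Finset A) : Prop :=
  ∃ i, i + k ≤ w.length ∧ walkEdgeAt k w i = e

/-- A `k`-uniform edge set is tightly connected if any two of its edges lie on a
common tight walk all of whose edges belong to it. -/
def TightlyConnected (k : ℕ) (E : Finset (Finset A)) : Prop :=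
  ∀ e₁ ∈ E, ∀ e₂ ∈ E, ∃ w : List A, IsTightWalk k E w ∧ EdgeOnWalk k w e₁ ∧ EdgeOnWalk k w e₂

/-- `w` is a closed tight walk: every cyclic interval of `k` consecutive vertices
forms an edge of `E`.  Its length is `w.length`. -/
def IsClosedTightWalk (k : ℕ) (E : Finset (Finset A)) (w : List A) : Prop :=
  k ≤ w.length ∧ ∀ i < w.length, ((w.rotate i).take k).toFinset ∈ E

/-- A tight Hamilton cycle: a cyclic ordering of all the vertices in which every `k`
cyclically consecutive vertices form an edge. -/
def HasTightHamCycle (k : ℕ) (V : Finset A) (E : Finset (Finset A)) : Prop :=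
  ∃ w : List A, w.Nodup ∧ w.toFinset = V ∧ IsClosedTightWalk k E w

/-- The `j`-th shadow: all `j`-element sets contained in some edge. -/
def shadow (j : ℕ) (E : Finset (Finset A)) : Finset (Finset A) :=
  E.biUnion fun e => e.powersetCard j

/-- The link graph of `S`: the `(k-d)`-graph whose edges are `e \ S` for edges `e ⊇ S`. -/
def link (S : Finset A) (E : Finset (Finset A)) : Finset (Finset A) :=
  (E.filter fun e => S ⊆ e).image fun e => e \ S

/-- `E` has a fractional matching of size at least `m`. -/
def HasFracMatching (E : Finset (Finset A)) (m : ℝ) : Prop :=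
  ∃ w : Finset A → ℝ,
    (∀ e ∈ E, 0 ≤ w e ∧ w e ≤ 1) ∧
    (∀ v : A, ∑ e ∈ E.filter (fun e' => v ∈ e'), w e ≤ 1) ∧
    m ≤ ∑ e ∈ E, w e

/-- `E` has a `b`-fractional matching of size at least `m` (vertex constraints on `V`). -/
def HasBFracMatching (V : Finset A) (E : Finset (Finset A)) (b : A → ℝ) (m : ℝ) : Prop :=
  ∃ w : Finset A → ℝ,
    (∀ e ∈ E, 0 ≤ w e ∧ w e ≤ 1) ∧
    (∀ v ∈ V, ∑ e ∈ E.filter (fun e' => v ∈ e'), w e ≤ b v) ∧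
    m ≤ ∑ e ∈ E, w e

/-- `γ`-robustly matchable: every vertex weighting with values in `[1-γ,1]` is realised
exactly by an edge weighting with values in `[0,1]`. -/
def RobustlyMatchable (γ : ℝ) (V : Finset A) (E : Finset (Finset A)) : Prop :=
  ∀ b : A → ℝ, (∀ v ∈ V, 1 - γ ≤ b v ∧ b v ≤ 1) →
    ∃ w : Finset A → ℝ, (∀ e ∈ E, 0 ≤ w e ∧ w e ≤ 1) ∧
      ∀ v ∈ V, ∑ e ∈ E.filter (fun e' => v ∈ e'), w e = b v

/-- A switcher: an edge `e` with a central vertex `a` such that for every `b ∈ e`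
there is `c ∉ e` with `(e ∪ {c}) \ {a}` and `(e ∪ {c}) \ {b}` both edges. -/
def HasSwitcher (C : Finset (Finset A)) : Prop :=
  ∃ e ∈ C, ∃ a ∈ e, ∀ b ∈ e, ∃ c, c ∉ e ∧
    insert c (e.erase a) ∈ C ∧ insert c (e.erase b) ∈ C

/-- An arc for the `d`-vicinity `C` of the `k`-graph with edge set `E`: a tuple of
`k+1` distinct vertices `v₁, …, v_{k+1}` with `{v₁,…,v_d} ∈ ∂_d`,
`{v_{d+1},…,v_k} ∈ C {v₁,…,v_d}`, `{v₂,…,v_{d+1}} ∈ ∂_d` and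
`{v_{d+2},…,v_{k+1}} ∈ C {v₂,…,v_{d+1}}`. -/
def HasArc (k d : ℕ) (E : Finset (Finset A)) (C : Finset A → Finset (Finset A)) : Prop :=
  ∃ l : List A, l.length = k + 1 ∧ l.Nodup ∧
    (l.take d).toFinset ∈ shadow d E ∧
    ((l.drop d).take (k - d)).toFinset ∈ C ((l.take d).toFinset) ∧
    ((l.drop 1).take d).toFinset ∈ shadow d E ∧
    (l.drop (d + 1)).toFinset ∈ C (((l.drop 1).take d).toFinset)

/-- The `k`-graph generated by a `d`-vicinity: all sets `B ∪ S` with `S ∈ ∂_d(E)`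
and `B ∈ C S`. -/
def generatedEdges (d : ℕ) (E : Finset (Finset A)) (C : Finset A → Finset (Finset A)) :
    Finset (Finset A) :=
  (shadow d E).biUnion fun S => (C S).image fun B => B ∪ S

/-- `α`-perturbed minimum relative `d`-degree at least `δ` for a `k`-graph on vertex
set `V` with edge set `E`. -/
def PerturbedDegLB (k d : ℕ) (a δ : ℝ) (V : Finset A) (E : Finset (Finset A)) : Prop :=
  ∀ j : ℕ, 1 ≤ j → j ≤ d →
    (∀ S ∈ shadow j E,
      δ * (((V.card - j).choose (k - j) : ℕ) : ℝ) ≤ ((E.filter fun e => S ⊆ e).card : ℝ)) ∧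
    ((((V.powersetCard j).filter fun S => S ∉ shadow j E).card : ℝ)
        ≤ a * ((V.card.choose j : ℕ) : ℝ)) ∧
    (∀ T : Finset A, (T ∈ shadow (j - 1) E ∨ (j = 1 ∧ T = ∅)) →
      ((((V.powersetCard j).filter fun S => T ⊆ S ∧ S ∉ shadow j E).card : ℝ)
        < a * ((V.card : ℝ) - (j : ℝ) + 1)))

/-- A `(γ, δ)`-Hamilton `d`-vicinity of a `k`-graph on `t = V.card` vertices. -/
def IsHamVicinity (k d : ℕ) (γ δ : ℝ) (V : Finset A) (E : Finset (Finset A))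
    (C : Finset A → Finset (Finset A)) : Prop :=
  (∀ S ∈ shadow d E, C S ⊆ link S E) ∧
  (∀ S ∈ shadow d E, TightlyConnected (k - d) (C S)) ∧
  (∀ S ∈ shadow d E, ∀ S' ∈ shadow d E, (C S ∩ C S').Nonempty) ∧
  (∀ S ∈ shadow d E, HasSwitcher (C S)) ∧
  HasArc k d E C ∧
  (∀ S ∈ shadow d E, HasFracMatching (C S) ((1 / (k : ℝ) + γ) * (V.card : ℝ))) ∧
  (∀ S ∈ shadow d E, (1 - δ + γ) * ((V.card.choose (k - d) : ℕ) : ℝ) ≤ ((C S).card : ℝ))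

/-- An `(a, γ, δ)`-Hamilton framework: a subgraph on vertex set `VH` with edge set `EH`
of a `k`-graph on vertex set `VR`, satisfying (F1)–(F5). -/
def IsHamFramework (k : ℕ) (a γ δ : ℝ) (VR VH : Finset A) (EH : Finset (Finset A)) : Prop :=
  (1 - a) * (VR.card : ℝ) ≤ (VH.card : ℝ) ∧
  TightlyConnected k EH ∧
  (∃ w : List A, IsClosedTightWalk k EH w ∧ w.length % k = 1 % k) ∧
  RobustlyMatchable γ VH EH ∧
  (∀ v ∈ VH, (1 - δ + γ) * (((VH.card - 1).choose (k - 1) : ℕ) : ℝ)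
      ≤ ((EH.filter fun e => v ∈ e).card : ℝ))

/-- A tight component: an edge-maximal tightly connected subgraph. -/
def IsTightComponent (k : ℕ) (E C : Finset (Finset A)) : Prop :=
  C ⊆ E ∧ TightlyConnected k C ∧
    ∀ C' : Finset (Finset A), C ⊆ C' → C' ⊆ E → TightlyConnected k C' → C' = C

/-- `δ` has the `(k,d)`-Hamilton-cycle property. -/
def HamCycleProp (k d : ℕ) (δ : ℝ) : Prop :=
  ∀ μ : ℝ, 0 < μ → ∃ n₀ : ℕ, ∀ (B : Type) [DecidableEq B],
    ∀ (V : Finset B) (E : Finset (Finset B)),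
      n₀ ≤ V.card → (∀ e ∈ E, e ⊆ V ∧ e.card = k) →
      (∀ S ⊆ V, S.card = d →
        (δ + μ) * (((V.card - d).choose (k - d) : ℕ) : ℝ)
          ≤ ((E.filter fun e => S ⊆ e).card : ℝ)) →
      HasTightHamCycle k V E

/-- `δ` has the `(k,d)`-Hamilton-framework property. -/
def HamFrameworkProp (k d : ℕ) (δ : ℝ) : Prop :=
  ∀ μ : ℝ, 0 < μ → ∃ γ₀ : ℝ, 0 < γ₀ ∧ ∀ γ : ℝ, 0 < γ → γ ≤ γ₀ →
    ∃ α₀ : ℝ, 0 < α₀ ∧ ∀ a : ℝ, 0 < a → a ≤ α₀ →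
      ∃ ε₀ : ℝ, 0 < ε₀ ∧ ∀ ε : ℝ, 0 < ε → ε ≤ ε₀ →
        ∃ t₀ : ℕ, ∀ t : ℕ, t₀ ≤ t →
          ∀ (B : Type) [DecidableEq B], ∀ (VR : Finset B) (ER : Finset (Finset B)),
            VR.card = t → (∀ e ∈ ER, e ⊆ VR ∧ e.card = k) →
            (∀ S ⊆ VR, S.card = d →
              (δ + μ) * (((t - d).choose (k - d) : ℕ) : ℝ)
                ≤ ((ER.filter fun e => S ⊆ e).card : ℝ)) →
            ∀ I : Finset (Finset B), I ⊆ ER → (I.card : ℝ) ≤ ε * ((t.choose k : ℕ) : ℝ) →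
              ∃ (VH : Finset B) (EH : Finset (Finset B)),
                VH ⊆ VR ∧ EH ⊆ ER ∧ (∀ e ∈ EH, e ⊆ VH) ∧ (∀ e ∈ EH, e ∉ I) ∧
                IsHamFramework k a γ δ VR VH EH

/-- `δ` has the `(k,d)`-Hamilton-vicinity property. -/
def HamVicinityProp (k d : ℕ) (δ : ℝ) : Prop :=
  ∀ μ : ℝ, 0 < μ → ∃ γ₀ : ℝ, 0 < γ₀ ∧ ∀ γ : ℝ, 0 < γ → γ ≤ γ₀ →
    ∃ α₀ : ℝ, 0 < α₀ ∧ ∀ a : ℝ, 0 < a → a ≤ α₀ →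
      ∃ t₀ : ℕ, ∀ t : ℕ, t₀ ≤ t →
        ∀ (B : Type) [DecidableEq B], ∀ (V : Finset B) (E : Finset (Finset B)),
          V.card = t → (∀ e ∈ E, e ⊆ V ∧ e.card = k) →
          PerturbedDegLB k d a (δ + μ) V E →
          (∀ v ∈ V, ∃ e ∈ E, v ∈ e) →
          ∃ C : Finset B → Finset (Finset B), IsHamVicinity k d γ δ V E C


set_option linter.unusedSectionVars false

section SRel
variable {B : Type*} [DecidableEq B]

def SRel (l : ℕ) (C : Finset (Finset B)) (σ τ : List B) : Prop :=
  ∃ w : List B, IsTightWalk l C w ∧ w.take l = σ ∧ w.drop (w.length - l) = τ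

variable {l : ℕ} {C : Finset (Finset B)}

lemma srel_lens {σ τ : List B} (h : SRel l C σ τ) : σ.length = l ∧ τ.length = l := by
  obtain ⟨w, hw, h1, h2⟩ := h
  have hn := hw.1
  constructor
  · rw [← h1, List.length_take]; omega
  · rw [← h2, List.length_drop]; omega

lemma srel_refl {σ : List B} (hσl : σ.length = l) (hσC : σ.toFinset ∈ C) : SRel l C σ σ := by
  refine ⟨σ, ⟨le_of_eq hσl.symm, ?_⟩, ?_, ?_⟩
  · intro i hi
    have hi0 : i = 0 := by omega
    subst hi0
    simpa [walkEdgeAt, List.take_of_length_le (le_of_eq hσl)] using hσC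
  · exact List.take_of_length_le (le_of_eq hσl)
  · simp [hσl]

lemma srel_trans {σ τ υ : List B} (h1 : SRel l C σ τ) (h2 : SRel l C τ υ) :
    SRel l C σ υ := by
  obtain ⟨w₁, hw₁, ha1, ha2⟩ := h1
  obtain ⟨w₂, hw₂, hb1, hb2⟩ := h2
  have hn₁ := hw₁.1
  have hn₂ := hw₂.1
  set t := w₁.take (w₁.length - l) with ht
  have hlen : t.length = w₁.length - l := by rw [ht, List.length_take]; omega
  have hkey : w₁ ++ w₂.drop l = t ++ w₂ := by
    conv_lhs => rw [← List.take_append_drop (w₁.length - l) w₁]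
    rw [ha2, ← hb1, ← ht, List.append_assoc, List.take_append_drop]
  refine ⟨w₁ ++ w₂.drop l, ⟨?_, ?_⟩, ?_, ?_⟩
  · rw [List.length_append]; omega
  · intro i hi
    rw [List.length_append, List.length_drop] at hi
    rcases le_or_gt (i + l) w₁.length with hc | hc
    · have : walkEdgeAt l (w₁ ++ w₂.drop l) i = walkEdgeAt l w₁ i := by
        unfold walkEdgeAt
        rw [List.drop_append_of_le_length (by omega), List.take_append_of_le_length]
        rw [List.length_drop]; omega
      rw [this]; exact hw₁.2 i hc
    · have hi' : w₁.length - l ≤ i := by omega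
      obtain ⟨k, rfl⟩ := Nat.exists_eq_add_of_le hi'
      have : walkEdgeAt l (w₁ ++ w₂.drop l) (w₁.length - l + k) = walkEdgeAt l w₂ k := by
        unfold walkEdgeAt
        rw [hkey, ← hlen, List.drop_append]; simp [List.drop_eq_nil_of_le (by omega : t.length ≤ t.length + k)]
      rw [this]; exact hw₂.2 k (by omega)
  · rw [List.take_append_of_le_length hn₁, ha1]
  · have harith : w₁.length + (w₂.length - l) - l = (w₁.length - l) + (w₂.length - l) := by
      omega
    rw [List.length_append, List.length_drop, harith, hkey, ← hlen, List.drop_append]; simp [hb2]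

lemma srel_step {v u : B} {rest : List B} (hlen : (v :: rest).length = l)
    (h1 : (v :: rest).toFinset ∈ C) (h2 : (rest ++ [u]).toFinset ∈ C) :
    SRel l C (v :: rest) (rest ++ [u]) := by
  have hr : rest.length = l - 1 := by simp at hlen; omega
  have hl1 : 1 ≤ l := by simp at hlen; omega
  refine ⟨v :: (rest ++ [u]), ⟨?_, ?_⟩, ?_, ?_⟩
  · simp; omega
  · intro i hi
    simp only [List.length_cons, List.length_append, List.length_cons, List.length_nil] at hi
    rcases i with _ | _ | i
    rotate_left
    rotate_left
    · exfalso; omega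
    · have : walkEdgeAt l (v :: (rest ++ [u])) 0 = (v :: rest).toFinset := by
        unfold walkEdgeAt
        rw [List.drop_zero]
        have : l = (l - 1) + 1 := by omega
        rw [this, List.take_succ_cons, List.take_append_of_le_length (by omega),
          ← hr, List.take_length]
      rw [this]; exact h1
    · have : walkEdgeAt l (v :: (rest ++ [u])) 1 = (rest ++ [u]).toFinset := by
        unfold walkEdgeAt
        simp only [List.drop_succ_cons, List.drop_zero]
        rw [List.take_of_length_le (by simp; omega)]
      rw [this]; exact h2
  · have : l = (l - 1) + 1 := by omega
    rw [this, List.take_succ_cons, List.take_append_of_le_length (by omega), ← hr,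
      List.take_length]
  · have : (v :: (rest ++ [u])).length - l = 1 := by simp; omega
    rw [this, List.drop_succ_cons, List.drop_zero]

lemma srel_rot1 {σ : List B} (hl : 1 ≤ l) (hσl : σ.length = l) (hσC : σ.toFinset ∈ C) :
    SRel l C σ (σ.rotate 1) := by
  match σ with
  | [] => simp at hσl; omega
  | v :: rest =>
    have hrot : (v :: rest).rotate 1 = rest ++ [v] := by
      rw [List.rotate_cons_succ, List.rotate_zero]
    rw [hrot]
    refine srel_step hσl hσC ?_
    have : (rest ++ [v]).toFinset = (v :: rest).toFinset := by
      ext x; simp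
    rw [this]; exact hσC

lemma srel_rotN {σ : List B} (hl : 1 ≤ l) (hσl : σ.length = l) (hσC : σ.toFinset ∈ C)
    (n : ℕ) : SRel l C σ (σ.rotate n) := by
  induction n with
  | zero => rw [List.rotate_zero]; exact srel_refl hσl hσC
  | succ n ih =>
    have h1 : (σ.rotate n).length = l := by rw [List.length_rotate]; exact hσl
    have h2 : (σ.rotate n).toFinset = σ.toFinset := List.toFinset_eq_of_perm _ _ (List.rotate_perm σ n)
    have := srel_rot1 (l := l) (C := C) hl h1 (h2 ▸ hσC)
    rw [List.rotate_rotate] at this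
    exact srel_trans ih this

lemma srel_reverse {σ τ : List B} (h : SRel l C σ τ) : SRel l C τ.reverse σ.reverse := by
  obtain ⟨w, hw, h1, h2⟩ := h
  have hn := hw.1
  refine ⟨w.reverse, ⟨by simpa using hn, ?_⟩, ?_, ?_⟩
  · intro i hi
    rw [List.length_reverse] at hi
    have : walkEdgeAt l w.reverse i = walkEdgeAt l w (w.length - i - l) := by
      unfold walkEdgeAt
      have e1 : w.reverse.drop i = (w.take (w.length - i)).reverse := by
        rw [List.reverse_take]; congr 1; omega
      have e2 : (w.take (w.length - i)).length = w.length - i := by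
        rw [List.length_take]; omega
      calc ((w.reverse.drop i).take l).toFinset
          = (((w.take (w.length - i)).drop (w.length - i - l)).reverse).toFinset := by
            rw [e1, List.take_reverse, e2]
        _ = ((w.take (w.length - i)).drop (w.length - i - l)).toFinset :=
            List.toFinset_reverse
        _ = ((w.drop (w.length - i - l)).take l).toFinset := by
            rw [List.drop_take]; congr 2; omega
    rw [this]; exact hw.2 _ (by omega)
  · rw [List.take_reverse, h2]
  · rw [List.length_reverse, ← List.reverse_take, h1]
end SRel

section LRel
variable {B : Type*}

/-- relation generated by rotations and swapping the first two elements. -/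
inductive LRel : List B → List B → Prop
  | refl (u : List B) : LRel u u
  | rot {u v : List B} : LRel u v → LRel u (v.rotate 1)
  | swap {u : List B} (x y : B) (t : List B) : LRel u (x :: y :: t) → LRel u (y :: x :: t)

lemma LRel.trans {u v w : List B} (h1 : LRel u v) (h2 : LRel v w) : LRel u w := by
  induction h2 with
  | refl => exact h1
  | rot _ ih => exact ih.rot
  | swap x y t _ ih => exact ih.swap x y t

lemma LRel.perm {u v : List B} (h : LRel u v) : u.Perm v := by
  induction h with
  | refl => exact List.Perm.refl _
  | rot _ ih => exact ih.trans (List.rotate_perm _ _).symm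
  | swap x y t _ ih => exact ih.trans (List.Perm.swap y x t)

lemma LRel.rotN {u v : List B} (h : LRel u v) (n : ℕ) : LRel u (v.rotate n) := by
  induction n with
  | zero => rw [List.rotate_zero]; exact h
  | succ n ih => rw [← List.rotate_rotate]; exact ih.rot

lemma lrel_rot1_cons (a : B) (t : List B) : (a :: t).rotate 1 = t ++ [a] := by
  rw [List.rotate_cons_succ, List.rotate_zero]

/-- swap positions 1 and 2 (fixing the head). -/
lemma LRel.swap12 {u : List B} (a x y : B) (t : List B) (h : LRel u (a :: x :: y :: t)) :
    LRel u (a :: y :: x :: t) := by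
  have h1 : LRel u (x :: y :: t ++ [a]) := by
    have := h.rot
    rwa [lrel_rot1_cons] at this
  have h2 : LRel u (y :: x :: t ++ [a]) := h1.swap x y (t ++ [a])
  have h3 : y :: x :: t ++ [a] = (a :: y :: x :: t).rotate 1 := by
    rw [lrel_rot1_cons]
  rw [h3] at h2
  have h4 := h2.rotN (t.length + 2)
  rwa [List.rotate_rotate, show 1 + (t.length + 2) = (a :: y :: x :: t).length by simp only [List.length_cons]; omega,
    List.rotate_length] at h4

lemma LRel.cons {u v : List B} (x : B) (h : LRel u v) : LRel (x :: u) (x :: v) := by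
  induction h with
  | refl => exact LRel.refl _
  | @rot v' _ ih =>
    match v' with
    | [] => simpa using ih
    | b :: t =>
      rw [lrel_rot1_cons]
      have h1 := ih.swap x b t
      have h2 := h1.rot
      rwa [lrel_rot1_cons, show x :: t ++ [b] = x :: (t ++ [b]) by simp] at h2
  | swap a b t _ ih => exact ih.swap12 x a b t

lemma perm_lrel {u v : List B} (h : u.Perm v) : LRel u v := by
  induction h with
  | nil => exact LRel.refl _
  | cons x _ ih => exact ih.cons x
  | swap x y t => exact (LRel.refl (y :: x :: t)).swap y x t
  | trans _ _ ih1 ih2 => exact ih1.trans ih2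

end LRel

section Switcher
variable {B : Type*} [DecidableEq B] {l : ℕ} {C : Finset (Finset B)}
variable {A : Finset B} {a : B}

lemma nodup_of_len_card {xs : List B} (h1 : xs.toFinset.card = xs.length) : xs.Nodup := by
  rw [List.card_toFinset] at h1
  have := (List.dedup_sublist xs).eq_of_length h1
  rw [← this]
  exact xs.nodup_dedup

lemma tail_toFinset_erase {x : B} {r : List B} (h : (x :: r).Nodup) :
    (x :: r).toFinset.erase x = r.toFinset := by
  rw [List.toFinset_cons, Finset.erase_insert]
  rw [List.mem_toFinset]
  exact (List.nodup_cons.mp h).1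

lemma perm_ord {s s' : List B} (hp : s.Perm s') (h1 : s.Nodup) (h2 : s.toFinset = A)
    (h3 : s.length = l) : s'.Nodup ∧ s'.toFinset = A ∧ s'.length = l :=
  ⟨hp.nodup_iff.mp h1, by rw [← List.toFinset_eq_of_perm _ _ hp]; exact h2,
    by rw [← hp.length_eq]; exact h3⟩

variable (hl : 1 ≤ l) (hA : A ∈ C) (ha : a ∈ A)
  (hsw : ∀ b ∈ A, ∃ c, c ∉ A ∧ insert c (A.erase a) ∈ C ∧ insert c (A.erase b) ∈ C)

include hl hA ha hsw in
/-- tail rotation at the switcher edge -/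
lemma srel_op1 (b : B) (γ : List B) (hnd : (a :: b :: γ).Nodup)
    (hfin : (a :: b :: γ).toFinset = A) (hlen : (a :: b :: γ).length = l) :
    SRel l C (a :: b :: γ) (a :: (γ ++ [b])) := by
  have hb : b ∈ A := by rw [← hfin]; simp
  obtain ⟨c, hcA, hE1, hE2⟩ := hsw b hb
  have hab : a ≠ b := by simp at hnd; tauto
  have hbγ : b ∉ γ := by simp at hnd; tauto
  have eA1 : A.erase a = (b :: γ).toFinset := by
    rw [← hfin]; exact tail_toFinset_erase hnd
  have eA2 : A.erase b = insert a γ.toFinset := by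
    rw [← hfin]
    simp only [List.toFinset_cons]
    rw [Finset.erase_insert_of_ne hab, Finset.erase_insert (by simpa using hbγ)]
  have E1eq : ((b :: γ) ++ [c]).toFinset = insert c (A.erase a) := by
    rw [eA1]; ext z; simp; tauto
  have E2eq : ((γ ++ [c]) ++ [a]).toFinset = insert c (A.erase b) := by
    rw [eA2]; ext z; simp
  have Aeq : ((a :: γ) ++ [b]).toFinset = A := by
    rw [← hfin]; ext z; simp
  have hlen2 : γ.length + 2 = l := by simpa using hlen
  -- step 1
  have s1 : SRel l C (a :: b :: γ) ((b :: γ) ++ [c]) := by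
    apply srel_step hlen (hfin ▸ hA)
    rw [E1eq]; exact hE1
  -- step 2
  have s2 : SRel l C (b :: (γ ++ [c])) ((γ ++ [c]) ++ [a]) := by
    apply srel_step
    · simp; omega
    · have : (b :: (γ ++ [c])).toFinset = insert c (A.erase a) := by
        rw [← E1eq]; simp
      rw [this]; exact hE1
    · rw [E2eq]; exact hE2
  -- step 3 : rotation within E2
  have s3 : SRel l C ((γ ++ [c]) ++ [a]) (c :: a :: γ) := by
    have hrot := srel_rotN (l := l) (C := C) hl
      (σ := (γ ++ [c]) ++ [a]) (by simp; omega) (by rw [E2eq]; exact hE2) γ.length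
    have : ((γ ++ [c]) ++ [a]).rotate γ.length = c :: a :: γ := by
      have h1 : (γ ++ [c]) ++ [a] = γ ++ [c, a] := by simp
      rw [h1, List.rotate_eq_drop_append_take (by simp), List.drop_left, List.take_left]
      rfl
    rwa [this] at hrot
  -- step 4
  have s4 : SRel l C (c :: (a :: γ)) ((a :: γ) ++ [b]) := by
    apply srel_step
    · simp; omega
    · have : (c :: (a :: γ)).toFinset = insert c (A.erase b) := by
        rw [eA2]; simp
      rw [this]; exact hE2
    · rw [Aeq]; exact hA
  have := srel_trans s1 (srel_trans s2 (srel_trans s3 s4))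
  simpa using this

include hl hA ha hsw in
/-- iterated tail rotation at the switcher edge -/
lemma srel_tailrotN (δ : List B) (hnd : (a :: δ).Nodup) (hfin : (a :: δ).toFinset = A)
    (hlen : (a :: δ).length = l) (n : ℕ) : SRel l C (a :: δ) (a :: δ.rotate n) := by
  induction n with
  | zero => rw [List.rotate_zero]; exact srel_refl hlen (hfin ▸ hA)
  | succ n ih =>
    have hperm : (a :: δ).Perm (a :: δ.rotate n) := (List.rotate_perm δ n).symm.cons a
    obtain ⟨h1, h2, h3⟩ := perm_ord hperm hnd hfin hlen
    match hδ : δ.rotate n with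
    | [] =>
      have : δ = [] := by
        have := congrArg List.length hδ
        simp at this
        exact this
      subst this; simpa using ih
    | b :: γ =>
      rw [hδ] at h1 h2 h3 ih
      have hop := srel_op1 hl hA ha hsw b γ h1 h2 h3
      have : a :: (γ ++ [b]) = a :: δ.rotate (n + 1) := by
        rw [← List.rotate_rotate, hδ, lrel_rot1_cons]
      rw [this] at hop
      exact srel_trans ih hop

include hl hA ha hsw in
/-- swap of the first two tail entries at the switcher edge -/
lemma srel_shat (x y : B) (t : List B) (hnd : (a :: x :: y :: t).Nodup)
    (hfin : (a :: x :: y :: t).toFinset = A) (hlen : (a :: x :: y :: t).length = l) :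
    SRel l C (a :: x :: y :: t) (a :: y :: x :: t) := by
  have hx : x ∈ A := by rw [← hfin]; simp
  have hy : y ∈ A := by rw [← hfin]; simp
  obtain ⟨c, hcA, hE1, hE2⟩ := hsw y hy
  have hax : a ≠ x := by simp at hnd; tauto
  have hay : a ≠ y := by simp at hnd; tauto
  have hxy : x ≠ y := by simp at hnd; tauto
  have hyt : y ∉ t := by simp at hnd; tauto
  have eA1 : A.erase a = (x :: y :: t).toFinset := by
    rw [← hfin]; exact tail_toFinset_erase hnd
  have eA2 : A.erase y = insert a (insert x t.toFinset) := by
    rw [← hfin]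
    simp only [List.toFinset_cons]
    rw [Finset.erase_insert_of_ne hay, Finset.erase_insert_of_ne hxy,
      Finset.erase_insert (by simpa using hyt)]
  have E1eq : ((x :: y :: t) ++ [c]).toFinset = insert c (A.erase a) := by
    rw [eA1]; ext z; simp; tauto
  have E2eq : (((t ++ [c]) ++ [x]) ++ [a]).toFinset = insert c (A.erase y) := by
    rw [eA2]; ext z; simp; tauto
  have Aeq : ((x :: a :: t) ++ [y]).toFinset = A := by
    rw [← hfin]; ext z; simp; tauto
  have hlen3 : t.length + 3 = l := by simpa using hlen
  -- u1
  have u1 : SRel l C (a :: x :: y :: t) ((x :: y :: t) ++ [c]) := by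
    apply srel_step hlen (hfin ▸ hA)
    rw [E1eq]; exact hE1
  -- u2 : rotation within E1
  have u2 : SRel l C ((x :: y :: t) ++ [c]) (((y :: t) ++ [c]) ++ [x]) := by
    have h0 : ((x :: y :: t) ++ [c]).toFinset ∈ C := by rw [E1eq]; exact hE1
    have hr := srel_rot1 (l := l) (C := C) hl (σ := (x :: y :: t) ++ [c])
      (by simp; omega) h0
    have : ((x :: y :: t) ++ [c]).rotate 1 = ((y :: t) ++ [c]) ++ [x] := by
      have : (x :: y :: t) ++ [c] = x :: ((y :: t) ++ [c]) := by simp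
      rw [this, lrel_rot1_cons]
    rwa [this] at hr
  -- u3
  have u3 : SRel l C (y :: ((t ++ [c]) ++ [x])) (((t ++ [c]) ++ [x]) ++ [a]) := by
    apply srel_step
    · simp; omega
    · have : (y :: ((t ++ [c]) ++ [x])).toFinset = insert c (A.erase a) := by
        rw [eA1]; ext z; simp; tauto
      rw [this]; exact hE1
    · rw [E2eq]; exact hE2
  -- u4 : rotation within E2
  have u4 : SRel l C (((t ++ [c]) ++ [x]) ++ [a]) (c :: x :: a :: t) := by
    have hr := srel_rotN (l := l) (C := C) hl (σ := ((t ++ [c]) ++ [x]) ++ [a])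
      (by simp; omega) (by rw [E2eq]; exact hE2) t.length
    have : (((t ++ [c]) ++ [x]) ++ [a]).rotate t.length = c :: x :: a :: t := by
      have h1 : ((t ++ [c]) ++ [x]) ++ [a] = t ++ [c, x, a] := by simp
      rw [h1, List.rotate_eq_drop_append_take (by simp), List.drop_left, List.take_left]
      rfl
    rwa [this] at hr
  -- u5
  have u5 : SRel l C (c :: (x :: a :: t)) ((x :: a :: t) ++ [y]) := by
    apply srel_step
    · simp; omega
    · have : (c :: (x :: a :: t)).toFinset = insert c (A.erase y) := by
        rw [eA2]; ext z; simp; tauto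
      rw [this]; exact hE2
    · rw [Aeq]; exact hA
  -- u6 : rotation within A
  have u6 : SRel l C ((x :: a :: t) ++ [y]) (((a :: t) ++ [y]) ++ [x]) := by
    have hr := srel_rot1 (l := l) (C := C) hl (σ := (x :: a :: t) ++ [y])
      (by simp; omega) (by rw [Aeq]; exact hA)
    have : ((x :: a :: t) ++ [y]).rotate 1 = ((a :: t) ++ [y]) ++ [x] := by
      have : (x :: a :: t) ++ [y] = x :: ((a :: t) ++ [y]) := by simp
      rw [this, lrel_rot1_cons]
    rwa [this] at hr
  -- u7 : tail rotations back to the result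
  have hperm7 : (a :: x :: y :: t).Perm (a :: ((t ++ [y]) ++ [x])) := by
    refine List.Perm.cons a ?_
    have p1 : (t ++ [y]) ++ [x] = t ++ [y, x] := by simp
    rw [p1]
    exact (List.perm_append_comm.trans (List.Perm.swap x y t)).symm
  have u7 : SRel l C (a :: ((t ++ [y]) ++ [x])) (a :: y :: x :: t) := by
    obtain ⟨h1, h2, h3⟩ := perm_ord hperm7 hnd hfin hlen
    have hr := srel_tailrotN hl hA ha hsw ((t ++ [y]) ++ [x]) h1 h2 h3 t.length
    have : ((t ++ [y]) ++ [x]).rotate t.length = y :: x :: t := by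
      have p1 : (t ++ [y]) ++ [x] = t ++ [y, x] := by simp
      rw [p1, List.rotate_eq_drop_append_take (by simp), List.drop_left, List.take_left]
      rfl
    rwa [this] at hr
  have final := srel_trans u1 (srel_trans u2 (srel_trans u3 (srel_trans u4
    (srel_trans u5 (srel_trans u6 u7)))))
  simpa using final

include hl hA ha hsw in
lemma srel_lift {u v : List B} (h : LRel u v) (hnd : (a :: u).Nodup)
    (hfin : (a :: u).toFinset = A) (hlen : (a :: u).length = l) :
    SRel l C (a :: u) (a :: v) := by
  induction h with
  | refl => exact srel_refl hlen (hfin ▸ hA)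
  | @rot v' h' ih =>
    have base : SRel l C (a :: u) (a :: v') := ih
    obtain ⟨h1, h2, h3⟩ := perm_ord (h'.perm.cons a) hnd hfin hlen
    match v' with
    | [] => simpa using base
    | b :: γ =>
      have hop := srel_op1 hl hA ha hsw b γ h1 h2 h3
      rw [← lrel_rot1_cons] at hop
      exact srel_trans base hop
  | @swap x y t h' ih =>
    obtain ⟨h1, h2, h3⟩ := perm_ord (h'.perm.cons a) hnd hfin hlen
    exact srel_trans ih (srel_shat hl hA ha hsw x y t h1 h2 h3)

include hl hA ha hsw in
/-- any two nodup orderings of the switcher edge are `SRel`-related -/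
lemma srel_reorder {σ τ : List B} (hσn : σ.Nodup) (hσf : σ.toFinset = A) (hσl : σ.length = l)
    (hτn : τ.Nodup) (hτf : τ.toFinset = A) (hτl : τ.length = l) : SRel l C σ τ := by
  have haσ : a ∈ σ := by rw [← List.mem_toFinset, hσf]; exact ha
  have haτ : a ∈ τ := by rw [← List.mem_toFinset, hτf]; exact ha
  obtain ⟨p, q, rfl⟩ := List.mem_iff_append.mp haσ
  obtain ⟨p', q', rfl⟩ := List.mem_iff_append.mp haτ
  have hple : p.length ≤ (p ++ a :: q).length := by simp
  have hple' : p'.length ≤ (p' ++ a :: q').length := by simp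
  have hrotσ : (p ++ a :: q).rotate p.length = a :: (q ++ p) := by
    rw [List.rotate_eq_drop_append_take hple, List.drop_left, List.take_left]
    simp
  have hrotτ : (p' ++ a :: q').rotate p'.length = a :: (q' ++ p') := by
    rw [List.rotate_eq_drop_append_take hple', List.drop_left, List.take_left]
    simp
  -- the rotated versions
  obtain ⟨hn1, hf1, hl1⟩ := perm_ord (hrotσ ▸ (List.rotate_perm _ p.length).symm :
    (p ++ a :: q).Perm (a :: (q ++ p))) hσn hσf hσl
  obtain ⟨hn2, hf2, hl2⟩ := perm_ord (hrotτ ▸ (List.rotate_perm _ p'.length).symm :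
    (p' ++ a :: q').Perm (a :: (q' ++ p'))) hτn hτf hτl
  have step1 : SRel l C (p ++ a :: q) (a :: (q ++ p)) := by
    have := srel_rotN hl hσl (hσf ▸ hA) p.length
    rwa [hrotσ] at this
  have step3 : SRel l C (a :: (q' ++ p')) (p' ++ a :: q') := by
    have := srel_rotN hl hl2 (hf2 ▸ hA) ((p' ++ a :: q').length - p'.length)
    rwa [← hrotτ, List.rotate_rotate, Nat.add_sub_cancel' hple', List.rotate_length, hrotτ] at this
  have hperm : (q ++ p).Perm (q' ++ p') := by
    have hστ : (p ++ a :: q).Perm (p' ++ a :: q') := by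
      rw [List.perm_ext_iff_of_nodup hσn hτn]
      intro z
      rw [← List.mem_toFinset, ← List.mem_toFinset, hσf, hτf]
    have : (a :: (q ++ p)).Perm (a :: (q' ++ p')) :=
      ((hrotσ ▸ (List.rotate_perm _ p.length) :
        (a :: (q ++ p)).Perm (p ++ a :: q)).trans hστ).trans
        (hrotτ ▸ (List.rotate_perm _ p'.length).symm)
    exact this.cons_inv
  have step2 : SRel l C (a :: (q ++ p)) (a :: (q' ++ p')) :=
    srel_lift hl hA ha hsw (perm_lrel hperm) hn1 hf1 hl1
  exact srel_trans step1 (srel_trans step2 step3)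

end Switcher

section Follow
variable {B : Type*} [DecidableEq B] {l : ℕ} {C : Finset (Finset B)}

lemma snoc_toFinset (u : B) (xs : List B) : (xs ++ [u]).toFinset = insert u xs.toFinset := by
  ext z; simp

lemma walkEdgeAt_reverse {w : List B} {i : ℕ} (hi : i + l ≤ w.length) :
    walkEdgeAt l w.reverse i = walkEdgeAt l w (w.length - i - l) := by
  unfold walkEdgeAt
  have e1 : w.reverse.drop i = (w.take (w.length - i)).reverse := by
    rw [List.reverse_take]; congr 1; omega
  have e2 : (w.take (w.length - i)).length = w.length - i := by
    rw [List.length_take]; omega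
  calc ((w.reverse.drop i).take l).toFinset
      = (((w.take (w.length - i)).drop (w.length - i - l)).reverse).toFinset := by
        rw [e1, List.take_reverse, e2]
    _ = ((w.take (w.length - i)).drop (w.length - i - l)).toFinset :=
        List.toFinset_reverse
    _ = ((w.drop (w.length - i - l)).take l).toFinset := by
        rw [List.drop_take]; congr 2; omega

lemma tight_reverse {w : List B} (hw : IsTightWalk l C w) : IsTightWalk l C w.reverse := by
  refine ⟨by simpa using hw.1, ?_⟩
  intro i hi
  rw [List.length_reverse] at hi
  rw [walkEdgeAt_reverse hi]
  exact hw.2 _ (by omega)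

lemma srel_follow (hl : 1 ≤ l) (hC : ∀ e ∈ C, e.card = l) {w : List B}
    (hw : IsTightWalk l C w) (i : ℕ) {σ : List B} (hσn : σ.Nodup) (hσl : σ.length = l)
    (hσf : σ.toFinset = walkEdgeAt l w i) :
    ∀ j, i ≤ j → j + l ≤ w.length →
      ∃ τ : List B, τ.Nodup ∧ τ.length = l ∧ τ.toFinset = walkEdgeAt l w j ∧ SRel l C σ τ := by
  intro j hij
  induction j, hij using Nat.le_induction with
  | base =>
    intro hjl
    exact ⟨σ, hσn, hσl, hσf, srel_refl hσl (hσf ▸ hw.2 i hjl)⟩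
  | succ j hij ih =>
    intro hjl
    have hjl' : j + l ≤ w.length := by omega
    obtain ⟨τ, hτn, hτl, hτf, hτr⟩ := ih hjl'
    obtain ⟨l', rfl⟩ : ∃ l', l = l' + 1 := ⟨l - 1, by omega⟩
    set m := (w.drop (j + 1)).take l' with hm
    have hjlt : j < w.length := by omega
    have hu : j + 1 + l' < w.length := by omega
    set u := w[j + 1 + l'] with hu'
    have f1 : (w.drop j).take (l' + 1) = w[j] :: m := by
      rw [List.drop_eq_getElem_cons hjlt, List.take_succ_cons]
    have hlen2 : l' < (w.drop (j + 1)).length := by rw [List.length_drop]; omega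
    have f2 : (w.drop (j + 1)).take (l' + 1) = m ++ [u] := by
      rw [List.take_succ, hm]
      congr 1
      rw [List.getElem?_eq_getElem hlen2]
      simp [List.getElem_drop]; rfl
    have hWj : (w[j] :: m).toFinset ∈ C := by
      have := hw.2 j hjl'
      unfold walkEdgeAt at this
      rwa [f1] at this
    have hWj1 : (m ++ [u]).toFinset ∈ C := by
      have := hw.2 (j + 1) hjl
      unfold walkEdgeAt at this
      rwa [f2] at this
    have len1 : (w[j] :: m).length = l' + 1 := by
      rw [← f1, List.length_take, List.length_drop]; omega
    have len2 : (m ++ [u]).length = l' + 1 := by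
      rw [← f2, List.length_take, List.length_drop]; omega
    have nodup1 : (w[j] :: m).Nodup :=
      nodup_of_len_card (by rw [hC _ hWj, len1])
    have nodup2 : (m ++ [u]).Nodup :=
      nodup_of_len_card (by rw [hC _ hWj1, len2])
    -- rotate τ to put w[j] first
    have hjmem : w[j] ∈ τ := by
      rw [← List.mem_toFinset, hτf]
      unfold walkEdgeAt
      rw [f1, List.mem_toFinset]
      exact List.mem_cons_self
    obtain ⟨p, q, hpq⟩ := List.mem_iff_append.mp hjmem
    have hple : p.length ≤ τ.length := by rw [hpq]; simp
    have hrot : τ.rotate p.length = w[j] :: (q ++ p) := by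
      rw [hpq, List.rotate_eq_drop_append_take (by simpa [hpq] using hple),
        List.drop_left, List.take_left]
      simp
    have hperm : τ.Perm (w[j] :: (q ++ p)) := hrot ▸ (List.rotate_perm τ p.length).symm
    have hn' : (w[j] :: (q ++ p)).Nodup := hperm.nodup_iff.mp hτn
    have hfin' : (w[j] :: (q ++ p)).toFinset = (w[j] :: m).toFinset := by
      rw [← List.toFinset_eq_of_perm _ _ hperm, hτf]
      unfold walkEdgeAt
      rw [f1]
    have hlen' : (w[j] :: (q ++ p)).length = l' + 1 := by
      rw [← hperm.length_eq, hτl]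
    have qp_eq : (q ++ p).toFinset = m.toFinset := by
      rw [← tail_toFinset_erase hn', hfin', tail_toFinset_erase nodup1]
    have hτC : τ.toFinset ∈ C := by
      rw [hτf]; unfold walkEdgeAt; rw [f1]; exact hWj
    have step_rot : SRel (l' + 1) C τ (w[j] :: (q ++ p)) := by
      have := srel_rotN hl hτl hτC p.length
      rwa [hrot] at this
    have dst_eq : ((q ++ p) ++ [u]).toFinset = (m ++ [u]).toFinset := by
      rw [snoc_toFinset, snoc_toFinset, qp_eq]
    have step : SRel (l' + 1) C (w[j] :: (q ++ p)) ((q ++ p) ++ [u]) := by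
      apply srel_step hlen' (hfin' ▸ hWj)
      rw [dst_eq]; exact hWj1
    have humem : u ∉ q ++ p := by
      have hum : u ∉ m := by
        rw [List.nodup_append] at nodup2
        intro h; exact nodup2.2.2 u h u (by simp) rfl
      rw [← List.mem_toFinset, qp_eq, List.mem_toFinset]
      exact hum
    refine ⟨(q ++ p) ++ [u], ?_, ?_, ?_, srel_trans hτr (srel_trans step_rot step)⟩
    · rw [List.nodup_append]
      refine ⟨(List.nodup_cons.mp hn').2, List.nodup_singleton u, ?_⟩
      intro x hx y hy hxy; simp at hy; rw [hxy, hy] at hx; exact humem hx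
    · have := hlen'
      simp at this ⊢
      omega
    · rw [dst_eq]
      unfold walkEdgeAt
      rw [f2]
  
end Follow

section Reach
variable {B : Type*} [DecidableEq B] {l : ℕ} {C : Finset (Finset B)}

lemma reach_switcher (hl : 1 ≤ l) (hC : ∀ e ∈ C, e.card = l) (hconn : TightlyConnected l C)
    {A : Finset B} (hA : A ∈ C) {σ : List B} (hσn : σ.Nodup) (hσl : σ.length = l)
    (hσC : σ.toFinset ∈ C) :
    ∃ τ : List B, τ.Nodup ∧ τ.length = l ∧ τ.toFinset = A ∧ SRel l C σ τ := by
  obtain ⟨w, hw, ⟨i, hi, hie⟩, ⟨j, hj, hjA⟩⟩ := hconn σ.toFinset hσC A hA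
  have hwl := hw.1
  rcases le_or_gt i j with hij | hji
  · obtain ⟨τ, h1, h2, h3, h4⟩ := srel_follow hl hC hw i hσn hσl hie.symm j hij hj
    exact ⟨τ, h1, h2, by rw [h3, hjA], h4⟩
  · have hw' := tight_reverse hw
    have hi' : (w.length - l - i) + l ≤ w.reverse.length := by
      rw [List.length_reverse]; omega
    have hj' : (w.length - l - j) + l ≤ w.reverse.length := by
      rw [List.length_reverse]; omega
    have hwi : walkEdgeAt l w.reverse (w.length - l - i) = walkEdgeAt l w i := by
      rw [walkEdgeAt_reverse (by omega : (w.length - l - i) + l ≤ w.length)]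
      congr 1; omega
    have hwj : walkEdgeAt l w.reverse (w.length - l - j) = walkEdgeAt l w j := by
      rw [walkEdgeAt_reverse (by omega : (w.length - l - j) + l ≤ w.length)]
      congr 1; omega
    obtain ⟨τ, h1, h2, h3, h4⟩ := srel_follow hl hC hw' (w.length - l - i) hσn hσl
      (by rw [hwi, hie]) (w.length - l - j) (by omega) hj'
    exact ⟨τ, h1, h2, by rw [h3, hwj, hjA], h4⟩

end Reach

/-- tightly connected plus a switcher gives strong connectivity. -/
theorem switcher_strongly_connected {B : Type*} [DecidableEq B] (l : ℕ) (hl : 1 ≤ l)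
    (C : Finset (Finset B)) (hC : ∀ e ∈ C, e.card = l)
    (hconn : TightlyConnected l C) (hsw : HasSwitcher C) :
    ∀ l₁ l₂ : List B, l₁.length = l → l₁.Nodup → l₁.toFinset ∈ C →
      l₂.length = l → l₂.Nodup → l₂.toFinset ∈ C →
      ∃ w : List B, IsTightWalk l C w ∧ w.take l = l₁ ∧ w.drop (w.length - l) = l₂ := by
  intro l₁ l₂ h1len h1nd h1C h2len h2nd h2C
  obtain ⟨A, hA, a, haA, hswA⟩ := hsw
  obtain ⟨τ₁, hτ₁n, hτ₁l, hτ₁f, hr₁⟩ := reach_switcher hl hC hconn hA h1nd h1len h1C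
  obtain ⟨τ₂, hτ₂n, hτ₂l, hτ₂f, hr₂⟩ := reach_switcher hl hC hconn hA
    (List.nodup_reverse.mpr h2nd) (by rw [List.length_reverse, h2len])
    (by rw [List.toFinset_reverse]; exact h2C)
  have hr₂' : SRel l C τ₂.reverse l₂ := by
    have := srel_reverse hr₂
    rwa [List.reverse_reverse] at this
  have hmid : SRel l C τ₁ τ₂.reverse :=
    srel_reorder hl hA haA hswA hτ₁n hτ₁f hτ₁l (List.nodup_reverse.mpr hτ₂n)
      (by rw [List.toFinset_reverse]; exact hτ₂f) (by rw [List.length_reverse]; exact hτ₂l)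
  exact srel_trans hr₁ (srel_trans hmid hr₂')
end

section
/- Let ℓ ≥ 1 and let C be a tightly connected ℓ-graph that contains a switcher. Then C contains a closed tight walk whose length is congruent to −1 modulo ℓ. -/
open Finset

variable {A : Type*} [DecidableEq A]

/-- tightly connected plus a switcher gives a closed tight walk of length
`≡ -1 (mod l)`. -/
theorem switcher_closed_walk_mod {B : Type*} [DecidableEq B] (l : ℕ) (hl : 1 ≤ l)
    (C : Finset (Finset B)) (hC : ∀ e ∈ C, e.card = l)
    (hconn : TightlyConnected l C) (hsw : HasSwitcher C) :
    ∃ w : List B, IsClosedTightWalk l C w ∧ w.length % l = (l - 1) % l := by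
  classical
  obtain ⟨e, heC, a, hae, hsw'⟩ := hsw
  rcases Nat.lt_or_ge 1 l with h2 | h1
  swap
  · -- case l = 1
    have hl1 : l = 1 := le_antisymm h1 hl
    subst hl1
    refine ⟨[a], ⟨by simp, ?_⟩, by simp⟩
    intro i hi
    simp only [List.length_singleton] at hi
    interval_cases i
    obtain ⟨x, hx⟩ := Finset.card_eq_one.mp (hC e heC)
    have hax : a = x := by rw [hx] at hae; simpa using hae
    simpa [List.rotate_zero, hax, ← hx] using heC
  -- main case: l = m + 1, m ≥ 1
  obtain ⟨m, rfl⟩ : ∃ m, l = m + 1 := ⟨l - 1, by omega⟩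
  have hm : 1 ≤ m := by omega
  haveI : Inhabited B := ⟨a⟩
  choose! co hco1 hco2 hco3 using hsw'
  set U : List B := (e.erase a).toList with hUdef
  have hUlen : U.length = m := by
    rw [hUdef, Finset.length_toList, Finset.card_erase_of_mem hae, hC e heC]; omega
  have hUnd : U.Nodup := Finset.nodup_toList _
  have hUf : U.toFinset = e.erase a := Finset.toList_toFinset _
  have he : insert a U.toFinset = e := by rw [hUf, Finset.insert_erase hae]
  have hVlen : ∀ j, (U.rotate j).length = m := fun j => by rw [List.length_rotate, hUlen]
  have hVf : ∀ j, (U.rotate j).toFinset = U.toFinset := fun j => by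
    ext x; simp [(U.rotate_perm j).mem_iff]
  have hVnd : ∀ j, (U.rotate j).Nodup := fun j => List.nodup_rotate.2 hUnd
  have hstruct : ∀ j, ∃ h T, U.rotate j = h :: T ∧ U.rotate (j + 1) = T ++ [h] ∧ h ∈ e ∧
      T.length + 1 = m ∧ insert a T.toFinset = e.erase h := by
    intro j
    cases hU : U.rotate j with
    | nil => exfalso; have := hVlen j; rw [hU] at this; simp at this; omega
    | cons h T =>
      have hhT : h ∉ T := by
        have := hVnd j; rw [hU] at this; exact (List.nodup_cons.mp this).1
      have hhU : h ∈ U.toFinset := by rw [← hVf j, hU]; simp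
      have hhe : h ∈ e.erase a := by rwa [hUf] at hhU
      have hha : h ≠ a := Finset.ne_of_mem_erase hhe
      refine ⟨h, T, rfl, ?_, Finset.mem_of_mem_erase hhe, ?_, ?_⟩
      · calc U.rotate (j + 1) = (U.rotate j).rotate 1 := (List.rotate_rotate U j 1).symm
          _ = (h :: T).rotate 1 := by rw [hU]
          _ = (T ++ [h]).rotate 0 := List.rotate_cons_succ T h 0
          _ = T ++ [h] := List.rotate_zero _
      · have := hVlen j; rw [hU] at this; simpa using this
      · have hTf : T.toFinset = U.toFinset.erase h := by
          rw [← hVf j, hU, List.toFinset_cons, Finset.erase_insert (by simpa using hhT)]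
        rw [hTf, hUf, Finset.erase_right_comm,
          Finset.insert_erase (Finset.mem_erase.mpr ⟨hha.symm, hae⟩)]
  set Bf : ℕ → List B := fun j => co ((U.rotate j).headI) :: a :: U.rotate (j + 1) with hBf
  have hBlen : ∀ j, (Bf j).length = m + 2 := fun j => by
    simp only [hBf, List.length_cons, hVlen]
  have hbind : ∀ L : List ℕ, (L.flatMap Bf).length = L.length * (m + 2) := by
    intro L
    induction L with
    | nil => simp
    | cons x xs ih => simp only [List.flatMap_cons, List.length_append, ih, hBlen,
        List.length_cons]; ring
  set W : List B := (List.range m).flatMap Bf with hW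
  have hWlen : W.length = m * (m + 2) := by rw [hW, hbind, List.length_range]
  have hlW : m + 1 ≤ W.length := by
    have h1 : 1 * (m + 2) ≤ m * (m + 2) := Nat.mul_le_mul_right _ hm
    omega
  have hrotm : ∀ k, U.rotate (k + m) = U.rotate k := by
    intro k
    have h1 := List.rotate_length (U.rotate k)
    rw [hVlen k] at h1
    rw [← List.rotate_rotate, h1]
  have hBper : ∀ j, Bf (j + m) = Bf j := by
    intro j
    simp only [hBf]
    rw [hrotm j, show j + m + 1 = (j + 1) + m from by omega, hrotm (j + 1)]
  have hWW : W ++ W = (List.range (2 * m)).flatMap Bf := by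
    rw [two_mul, List.range_add, List.flatMap_append, hW]
    congr 1
    have : ∀ L : List ℕ, (L.map (fun x => m + x)).flatMap Bf = L.flatMap Bf := by
      intro L
      induction L with
      | nil => rfl
      | cons x xs ih =>
        simp only [List.map_cons, List.flatMap_cons, ih]
        rw [Nat.add_comm m x, hBper]
    exact (this _).symm
  -- the key computation: any window of length m+1 inside two consecutive blocks is an edge
  have hmain : ∀ q (r : ℕ) (rest : List B), r < m + 2 →
      (((Bf q ++ (Bf (q + 1) ++ rest)).drop r).take (m + 1)).toFinset ∈ C := by
    intro q r rest hr
    obtain ⟨h0, T0, hV0, hV0', hh0e, hT0len, hT0ins⟩ := hstruct q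
    obtain ⟨h1, T1, hV1, hV1', hh1e, hT1len, hT1ins⟩ := hstruct (q + 1)
    rcases Nat.lt_or_ge r 2 with hr2 | hr2
    · interval_cases r
      · -- r = 0 : window is co h0 :: a :: T0, an edge of the form insert (co h0) (e.erase h0)
        have hwin : ((Bf q ++ (Bf (q + 1) ++ rest)).drop 0).take (m + 1)
            = co h0 :: a :: T0 := by
          simp only [hBf, hV0, hV0', List.headI, List.drop_zero, List.cons_append]
          rw [show m + 1 = T0.length + 1 + 1 from by omega, List.take_succ_cons,
            List.take_succ_cons, List.append_assoc, List.take_left]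
        rw [hwin]
        have hset : (co h0 :: a :: T0).toFinset = insert (co h0) (e.erase h0) := by
          simp [List.toFinset_cons, hT0ins]
        rw [hset]
        exact hco3 h0 hh0e
      · -- r = 1 : window is a :: U.rotate (q+1), the edge e itself
        have hwin : ((Bf q ++ (Bf (q + 1) ++ rest)).drop 1).take (m + 1)
            = a :: U.rotate (q + 1) := by
          simp only [hBf, List.cons_append]
          rw [show (1 : ℕ) = 0 + 1 from rfl, List.drop_succ_cons, List.drop_zero,
            List.take_succ_cons, List.take_append_of_le_length (by rw [hVlen]),
            List.take_of_length_le (by rw [hVlen])]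
        rw [hwin]
        have hset : (a :: U.rotate (q + 1)).toFinset = e := by
          rw [List.toFinset_cons, hVf, he]
        rw [hset]
        exact heC
    · obtain ⟨s, rfl⟩ : ∃ s, r = s + 2 := ⟨r - 2, by omega⟩
      have hdrop2 : (Bf q ++ (Bf (q + 1) ++ rest)).drop (s + 2)
          = (h1 :: (T1 ++ (Bf (q + 1) ++ rest))).drop s := by
        simp only [hBf, hV1, List.cons_append]
        rw [show s + 2 = s + 1 + 1 from rfl, List.drop_succ_cons, List.drop_succ_cons]
      rw [hdrop2]
      rcases s with _ | s'
      · -- s = 0 : window is h1 :: (T1 ++ [co h1]), edge insert (co h1) (e.erase a)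
        have hwin : ((h1 :: (T1 ++ (Bf (q + 1) ++ rest))).drop 0).take (m + 1)
            = h1 :: (T1 ++ [co h1]) := by
          rw [List.drop_zero, List.take_succ_cons,
            List.take_append,
            List.take_of_length_le (by omega),
            show m - T1.length = 1 from by omega]
          simp only [hBf, hV1, List.headI, List.cons_append]
          rw [List.take_succ_cons, List.take_zero]
        rw [hwin]
        have hset : (h1 :: (T1 ++ [co h1])).toFinset = insert (co h1) (e.erase a) := by
          have h1T : (h1 :: T1).toFinset = e.erase a := by rw [← hV1, hVf, hUf]
          rw [← h1T]
          ext z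
          simp only [List.toFinset_cons, List.toFinset_append, Finset.mem_insert,
            Finset.mem_union, List.mem_toFinset, List.toFinset_cons, List.toFinset_nil,
            Finset.mem_singleton]
          tauto
        rw [hset]
        exact hco2 h1 hh1e
      · -- s = s' + 1 : window is drop s' T1 ++ (co h1 :: a :: take s' T1)
        have hs' : s' + 1 < m := by omega
        have hsT : s' ≤ T1.length := by omega
        have hwin : ((h1 :: (T1 ++ (Bf (q + 1) ++ rest))).drop (s' + 1)).take (m + 1)
            = T1.drop s' ++ (co h1 :: a :: T1.take s') := by
          rw [List.drop_succ_cons, List.drop_append,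
            Nat.sub_eq_zero_of_le hsT, List.drop_zero,
            List.take_append,
            List.take_of_length_le (by rw [List.length_drop]; omega),
            show m + 1 - (T1.drop s').length = s' + 2 from by rw [List.length_drop]; omega]
          simp only [hBf, hV1, hV1', List.headI, List.cons_append]
          rw [show s' + 2 = s' + 1 + 1 from rfl, List.take_succ_cons, List.take_succ_cons,
            List.append_assoc, List.take_append_of_le_length hsT]
        rw [hwin]
        have hz : ∀ z : B, z ∈ T1 ↔ z ∈ T1.take s' ∨ z ∈ T1.drop s' := fun z => by
          conv_lhs => rw [← List.take_append_drop s' T1]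
          exact List.mem_append
        have hset : (T1.drop s' ++ (co h1 :: a :: T1.take s')).toFinset
            = insert (co h1) (insert a T1.toFinset) := by
          ext z
          simp only [List.toFinset_append, List.toFinset_cons, Finset.mem_union,
            Finset.mem_insert, List.mem_toFinset, hz z]
          tauto
        rw [hset, hT1ins]
        exact hco3 h1 hh1e
  refine ⟨W, ⟨hlW, ?_⟩, ?_⟩
  · intro i hi
    have hrw : (W.rotate i).take (m + 1) = ((W ++ W).drop i).take (m + 1) := by
      rw [List.rotate_eq_drop_append_take (le_of_lt hi),
        List.drop_append, Nat.sub_eq_zero_of_le (le_of_lt hi), List.drop_zero,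
        List.take_append, List.take_append, List.take_take,
        inf_eq_left.mpr (by rw [List.length_drop]; omega)]
    rw [hrw, hWW]
    have hqm : i / (m + 2) < m := by
      rw [Nat.div_lt_iff_lt_mul (by omega)]
      calc i < W.length := hi
        _ = m * (m + 2) := hWlen
    have hrm : i % (m + 2) < m + 2 := Nat.mod_lt _ (by omega)
    have hiqr : i = i / (m + 2) * (m + 2) + i % (m + 2) := (Nat.div_add_mod' i (m + 2)).symm
    set q := i / (m + 2) with hq
    set r := i % (m + 2) with hr
    have hsplitR : List.range (2 * m) = List.range' 0 q ++ List.range' q (2 * m - q) := by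
      have h := List.range'_append (s := 0) (m := q) (n := 2 * m - q) (step := 1)
      rw [show 0 + 1 * q = q from by omega, show q + (2 * m - q) = 2 * m from by omega] at h
      rw [List.range_eq_range', ← h]
    rw [hsplitR, List.flatMap_append, hiqr, ← List.drop_drop,
      List.drop_left' (by rw [hbind, List.length_range'])]
    rw [show 2 * m - q = (2 * m - q - 2) + 1 + 1 from by omega, List.range'_succ,
      List.range'_succ, List.flatMap_cons, List.flatMap_cons]
    exact hmain q r _ hrm
  · rw [hWlen, show m * (m + 2) = m + m * (m + 1) from by ring, Nat.add_mul_mod_self_right]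
    norm_num
end

section
/- (Short closed walks with prescribed ends and residue.) Let H be a k-graph on t vertices and let X and Y be k-tuples of vertices of H. Suppose there is a closed tight walk in H of length L ≥ k whose first k vertices form the tuple X and whose last k vertices form the tuple Y. Then there is a closed tight walk in H of length at most k·t^k whose first k vertices form X, whose last k vertices form Y, and whose length is congruent to L modulo k. -/
open Finset

variable {A : Type*} [DecidableEq A]

/-- Nodup from toFinset card. -/
lemma SCW_nodup {B : Type*} [DecidableEq B] (l : List B) (h : l.toFinset.card = l.length) :
    l.Nodup := by
  have h2 := List.card_toFinset l
  have hs : l.dedup.Sublist l := List.dedup_sublist l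
  have := hs.eq_of_length (by omega)
  rw [← this]; exact l.nodup_dedup

/-- Two cyclic windows agree if the underlying periodic sequences agree. -/
lemma SCW_window_eq {B : Type*} (d : B) (k : ℕ) (v v' : List B) (i i' : ℕ)
    (hv : k ≤ v.length) (hv' : k ≤ v'.length)
    (h : ∀ s, s < k → v.getD ((i + s) % v.length) d = v'.getD ((i' + s) % v'.length) d) :
    (v.rotate i).take k = (v'.rotate i').take k := by
  apply List.ext_getElem
  · simp; omega
  · intro n h1 h2
    have hn : n < k := ((by simpa using h1 : n < k ∧ n < v.length)).1
    rw [List.getElem_take, List.getElem_take, List.getElem_rotate, List.getElem_rotate]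
    have e1 : (i + n) % v.length < v.length := Nat.mod_lt _ (by omega)
    have e2 : (i' + n) % v'.length < v'.length := Nat.mod_lt _ (by omega)
    have hh := h n hn
    rw [List.getD_eq_getElem _ _ e1, List.getD_eq_getElem _ _ e2] at hh
    simpa [Nat.add_comm] using hh

/-- The window embedding. -/
def SCW_emb {B : Type*} [DecidableEq B] (d : B) (k : ℕ) (V : Finset B) (w : List B) (p : ℕ)
    (hpk : p + k ≤ w.length) (h2 : ((w.drop p).take k).Nodup)
    (h3 : ∀ s : Fin k, w.getD (p + s) d ∈ V) : Fin k ↪ {x // x ∈ V} where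
  toFun s := ⟨w.getD (p + s) d, h3 s⟩
  inj' a b hab := by
    have hlen : ((w.drop p).take k).length = k := by
      simp [List.length_take, List.length_drop]; omega
    have hval : ∀ a : Fin k, w.getD (p + a.val) d
        = ((w.drop p).take k).get ⟨a.val, by rw [hlen]; exact a.isLt⟩ := by
      intro a
      rw [List.getD_eq_getElem w d (by omega), List.get_eq_getElem]
      rw [List.getElem_take, List.getElem_drop]
    have h' : ((w.drop p).take k).get ⟨a.val, by rw [hlen]; exact a.isLt⟩
        = ((w.drop p).take k).get ⟨b.val, by rw [hlen]; exact b.isLt⟩ := by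
      rw [← hval a, ← hval b]; exact Subtype.ext_iff.mp hab
    have := List.nodup_iff_injective_get.mp h2 h'
    exact Fin.ext (by simpa using congrArg Fin.val this)

lemma SCW_emb_apply {B : Type*} [DecidableEq B] (d : B) (k : ℕ) (V : Finset B) (w : List B)
    (p : ℕ) (hpk : p + k ≤ w.length) (h2 : ((w.drop p).take k).Nodup)
    (h3 : ∀ s : Fin k, w.getD (p + s) d ∈ V) (s : Fin k) :
    (SCW_emb d k V w p hpk h2 h3 s : B) = w.getD (p + s) d := rfl

/-- Arithmetic. -/
lemma SCW_arith (k t : ℕ) (hk : 1 ≤ k) (ht : k ≤ t) :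
    k * Nat.descFactorial t k + k ≤ k * t ^ k + 1 := by
  match k, hk with
  | 1, _ => simp [Nat.descFactorial]
  | (m+2), _ =>
    have hD : Nat.descFactorial t (m+2) ≤ (t-1) * (t * t^m) := by
      rw [Nat.descFactorial_succ, Nat.descFactorial_succ]
      have h1 : t - (m+1) ≤ t - 1 := by omega
      have h2 : t - m ≤ t := by omega
      have h3 : Nat.descFactorial t m ≤ t ^ m := Nat.descFactorial_le_pow t m
      exact Nat.mul_le_mul h1 (Nat.mul_le_mul h2 h3)
    obtain ⟨t', rfl⟩ : ∃ t', t = t' + 1 := ⟨t - 1, by omega⟩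
    have hP : 1 ≤ (t'+1) * (t'+1)^m := Nat.one_le_iff_ne_zero.mpr (by positivity)
    have hpow : (t'+1)^(m+2) = (t'+1) * ((t'+1) * (t'+1)^m) := by ring
    simp only [Nat.add_sub_cancel] at hD
    nlinarith [hD, hP]

lemma SCW_reduction {B : Type*} [DecidableEq B] (k : ℕ) (hk : 1 ≤ k)
    (V : Finset B) (E : Finset (Finset B)) (hE : ∀ e ∈ E, e ⊆ V ∧ e.card = k)
    (w : List B) (hw : IsClosedTightWalk k E w) (hlong : k * V.card ^ k < w.length) :
    ∃ w' : List B, IsClosedTightWalk k E w' ∧ w'.length < w.length ∧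
      w'.take k = w.take k ∧ w'.drop (w'.length - k) = w.drop (w.length - k) ∧
      w'.length % k = w.length % k := by
  obtain ⟨hkL, hwin⟩ := hw
  set L := w.length with hLdef
  set t := V.card with htdef
  have hL0 : 0 < L := by omega
  have hd0 : 0 < w.length := hL0
  set d := w.get ⟨0, hd0⟩ with hddef
  -- t ≥ k
  have htk : k ≤ t := by
    have h0 := hwin 0 hL0
    rw [List.rotate_zero] at h0
    have h1 := hE _ h0
    have h2 : (w.take k).toFinset.card ≤ t := Finset.card_le_card h1.1
    omega
  -- window facts
  have hulen : ∀ p : ℕ, p + k ≤ L → ((w.drop p).take k).length = k := by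
    intro p hp; simp [List.length_take, List.length_drop]; omega
  have hurot : ∀ p : ℕ, p + k ≤ L → (w.rotate p).take k = (w.drop p).take k := by
    intro p hp
    have h1 : k - (w.drop p).length = 0 := by rw [List.length_drop]; omega
    rw [List.rotate_eq_drop_append_take (by omega), List.take_append, h1]
    simp
  have huE : ∀ p : ℕ, p + k ≤ L → ((w.drop p).take k).toFinset ∈ E := by
    intro p hp; rw [← hurot p hp]; exact hwin p (by omega)
  have hund : ∀ p : ℕ, p + k ≤ L → ((w.drop p).take k).Nodup := by
    intro p hp
    apply SCW_nodup
    rw [hulen p hp, (hE _ (huE p hp)).2]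
  have hgetu : ∀ p : ℕ, (hp : p + k ≤ L) → ∀ s : Fin k,
      w.getD (p + s) d = ((w.drop p).take k).get ⟨s.val, by rw [hulen p hp]; exact s.isLt⟩ := by
    intro p hp s
    rw [List.getD_eq_getElem w d (by omega), List.get_eq_getElem]
    rw [List.getElem_take, List.getElem_drop]
  have hmemV : ∀ p : ℕ, (hp : p + k ≤ L) → ∀ s : Fin k, w.getD (p + s) d ∈ V := by
    intro p hp s
    rw [hgetu p hp s]
    exact (hE _ (huE p hp)).1 (List.mem_toFinset.mpr (List.get_mem _ _))
  have h0k : 0 + k ≤ L := by omega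
  -- the main construction given a repeated window
  suffices main : ∀ p q : ℕ, p < q → q + k ≤ L → p % k = q % k →
      (∀ s, s < k → w.getD (p + s) d = w.getD (q + s) d) →
      ∃ w' : List B, IsClosedTightWalk k E w' ∧ w'.length < w.length ∧
        w'.take k = w.take k ∧ w'.drop (w'.length - k) = w.drop (w.length - k) ∧
        w'.length % k = w.length % k by
    -- pigeonhole
    have hcard : ((Finset.range k) ×ˢ
        (Finset.univ : Finset (Fin k ↪ {x // x ∈ V}))).card < (Finset.range (L - k + 1)).card := by
      rw [Finset.card_product, Finset.card_range, Finset.card_range, Finset.card_univ,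
        Fintype.card_embedding_eq, Fintype.card_fin, Fintype.card_coe]
      rw [← htdef]
      have := SCW_arith k t hk htk
      omega
    obtain ⟨p, hp, q, hq, hne, hfe⟩ :=
      Finset.exists_ne_map_eq_of_card_lt_of_maps_to
        (f := fun p => ((p % k : ℕ),
          if hp : p + k ≤ L then SCW_emb d k V w p hp (hund p hp) (hmemV p hp)
          else SCW_emb d k V w 0 h0k (hund 0 h0k) (hmemV 0 h0k)))
        hcard
        (fun a _ => by
          refine Finset.mem_product.mpr ⟨Finset.mem_range.mpr (Nat.mod_lt _ (by omega)),
            Finset.mem_univ _⟩)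
    rw [Finset.mem_range] at hp hq
    have hpk : p + k ≤ L := by omega
    have hqk : q + k ≤ L := by omega
    simp only [dif_pos hpk, dif_pos hqk, Prod.mk.injEq] at hfe
    obtain ⟨hmod, hemb⟩ := hfe
    have KE : ∀ s, s < k → w.getD (p + s) d = w.getD (q + s) d := by
      intro s hs
      have := congrArg (fun e : Fin k ↪ {x // x ∈ V} => (e ⟨s, hs⟩ : B)) hemb
      simpa [SCW_emb_apply] using this
    rcases hne.lt_or_gt with hlt | hlt
    · exact main p q hlt hqk hmod KE
    · exact main q p hlt hpk hmod.symm (fun s hs => (KE s hs).symm)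
  -- proof of main
  intro p q hpq hqk hmod KE
  have hpk : p + k ≤ L := by omega
  set w' := w.take p ++ w.drop q with hw'def
  set L' := p + (L - q) with hL'def
  have hL' : w'.length = L' := by
    simp [hw'def, List.length_take, List.length_drop]; omega
  have hkL' : k ≤ L' := by omega
  have hLL' : L = L' + (q - p) := by omega
  have htakelen : (w.take p).length = p := by
    simp [List.length_take]; omega
  -- structure of w'
  have hw1 : ∀ j, j < p → w'.getD j d = w.getD j d := by
    intro j hj
    rw [List.getD_eq_getElem w' d (by omega), List.getD_eq_getElem w d (by omega)]
    have hjp : j < (w.take p).length := by omega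
    simp only [hw'def]
    rw [List.getElem_append, dif_pos hjp, List.getElem_take]
  have hw2 : ∀ j, p ≤ j → j < L' → w'.getD j d = w.getD (j + (q - p)) d := by
    intro j h1 h2
    rw [List.getD_eq_getElem w' d (by omega), List.getD_eq_getElem w d (by omega)]
    have hjp : ¬ j < (w.take p).length := by omega
    simp only [hw'def]
    rw [List.getElem_append, dif_neg hjp, List.getElem_drop]
    congr 1
    rw [htakelen]
    omega
  -- the repeated-window identity, restated
  have KE' : ∀ j, p ≤ j → j < p + k → w.getD (j + (q - p)) d = w.getD j d := by
    intro j h1 h2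
    have := KE (j - p) (by omega)
    rw [show j + (q - p) = q + (j - p) by omega, ← this, show p + (j - p) = j by omega]
  refine ⟨w', ⟨by omega, ?_⟩, by omega, ?_, ?_, ?_⟩
  · -- closedness
    intro i hi
    rw [hL'] at hi
    have hσ : (if i < p then i else i + (q - p)) < L := by split <;> omega
    have heqw : (w'.rotate i).take k
        = (w.rotate (if i < p then i else i + (q - p))).take k := by
      apply SCW_window_eq d k w' w _ _ (by omega) hkL
      intro s hs
      rw [hL']
      by_cases hip : i < p
      · rw [if_pos hip]
        have hjlt : i + s < L' := by omega
        rw [Nat.mod_eq_of_lt hjlt, Nat.mod_eq_of_lt (by omega : i + s < w.length)]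
        by_cases hjp : i + s < p
        · exact hw1 _ hjp
        · rw [hw2 _ (by omega) hjlt]
          exact KE' (i + s) (by omega) (by omega)
      · rw [if_neg hip]
        push_neg at hip
        by_cases hjl : i + s < L'
        · rw [Nat.mod_eq_of_lt hjl, hw2 _ (by omega) hjl,
            show i + (q - p) + s = i + s + (q - p) by omega,
            Nat.mod_eq_of_lt (by omega : i + s + (q - p) < w.length)]
        · push_neg at hjl
          have hm : (i + s) % L' = i + s - L' := by
            rw [Nat.mod_eq_sub_mod hjl, Nat.mod_eq_of_lt (by omega)]
          have hn : (i + (q - p) + s) % w.length = i + s - L' := by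
            rw [show i + (q - p) + s = (i + s - L') + L by omega, Nat.add_mod_right,
              Nat.mod_eq_of_lt (by omega)]
          rw [hm, hn]
          by_cases hmp : i + s - L' < p
          · exact hw1 _ hmp
          · rw [hw2 _ (by omega) (by omega)]
            exact KE' (i + s - L') (by omega) (by omega)
    rw [heqw]
    exact hwin _ hσ
  · -- take k
    apply List.ext_getElem
    · simp [List.length_take]; omega
    · intro n h1 h2
      have hn : n < k := by simp [List.length_take] at h1; omega
      rw [List.getElem_take, List.getElem_take,
        ← List.getD_eq_getElem w' d (by omega), ← List.getD_eq_getElem w d (by omega)]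
      by_cases hnp : n < p
      · exact hw1 _ hnp
      · rw [hw2 _ (by omega) (by omega)]
        exact KE' n (by omega) (by omega)
  · -- drop
    have hidx : w'.length - k = (w.take p).length + (L - q - k) := by
      rw [htakelen, hL']; omega
    rw [hidx, hw'def, List.drop_length_add_append, List.drop_drop]
    congr 1
    omega
  · -- residue
    have hdvd : k ∣ q - p := (Nat.modEq_iff_dvd' (le_of_lt hpq)).mp hmod
    obtain ⟨c, hc⟩ := hdvd
    have hwl : w.length = L' + k * c := by omega
    rw [hL', hwl, Nat.add_mul_mod_self_left]

lemma SCW_aux {B : Type*} [DecidableEq B] (k : ℕ) (hk : 1 ≤ k)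
    (V : Finset B) (E : Finset (Finset B)) (hE : ∀ e ∈ E, e ⊆ V ∧ e.card = k) :
    ∀ (n : ℕ) (w : List B), w.length ≤ n → IsClosedTightWalk k E w →
    ∃ w' : List B, IsClosedTightWalk k E w' ∧ w'.length ≤ k * V.card ^ k ∧
      w'.take k = w.take k ∧ w'.drop (w'.length - k) = w.drop (w.length - k) ∧
      w'.length % k = w.length % k := by
  intro n
  induction n with
  | zero => intro w hlen hcw; exact absurd hcw.1 (by omega)
  | succ n ih =>
    intro w hlen hcw
    by_cases hle : w.length ≤ k * V.card ^ k
    · exact ⟨w, hcw, hle, rfl, rfl, rfl⟩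
    · obtain ⟨w', hcw', hlt, ht, hd, hm⟩ := SCW_reduction k hk V E hE w hcw (by omega)
      obtain ⟨w'', h1, h2, h3, h4, h5⟩ := ih w' (by omega) hcw'
      exact ⟨w'', h1, h2, h3.trans ht, h4.trans hd, h5.trans hm⟩

/-- short closed walks with prescribed ends and residue. -/
theorem short_closed_walk {B : Type*} [DecidableEq B] (k : ℕ) (hk : 1 ≤ k)
    (V : Finset B) (E : Finset (Finset B)) (hE : ∀ e ∈ E, e ⊆ V ∧ e.card = k)
    (X Y : List B) (hX : X.length = k) (hY : Y.length = k)
    (w : List B) (hw : IsClosedTightWalk k E w)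
    (hstart : w.take k = X) (hend : w.drop (w.length - k) = Y) :
    ∃ w' : List B, IsClosedTightWalk k E w' ∧ w'.length ≤ k * V.card ^ k ∧
      w'.take k = X ∧ w'.drop (w'.length - k) = Y ∧ w'.length % k = w.length % k := by
  obtain ⟨w', h1, h2, h3, h4, h5⟩ := SCW_aux k hk V E hE w.length w le_rfl hw
  exact ⟨w', h1, h2, by rw [h3, hstart], by rw [h4, hend], h5⟩
end
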